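/- Let u : ℝ × ℝ → ℝ be differentiable and suppose it satisfies the age-structured population equation ∂u/∂t(a,t) + ∂u/∂a(a,t) = -μ(a,t)·u(a,t) + λ(a,t) at every point, where μ, λ : ℝ × ℝ → ℝ satisfy μ(a,t) ≥ 0 and λ(a,t) ≥ 0 for all (a,t). If the initial datum satisfies u(a,0) ≥ 0 for all a ≥ 0, then u(a,t) ≥ 0 for all t ≥ 0 and all a ≥ t. -/

import Mathlib

/-- Barrier lemma: a differentiable function with nonnegative initial value whose
derivative is nonnegative wherever the function is negative stays nonnegative. -/
lemma nonneg_of_deriv_nonneg_of_neg (v : ℝ → ℝ) (hv : Differentiable ℝ v)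
    (h0 : 0 ≤ v 0) (hd : ∀ s, v s < 0 → 0 ≤ deriv v s) :
    ∀ t : ℝ, 0 ≤ t → 0 ≤ v t := by
  intro t ht
  by_contra hneg
  push_neg at hneg
  set S : Set ℝ := {s | s ∈ Set.Icc (0:ℝ) t ∧ 0 ≤ v s} with hS
  have hSne : S.Nonempty := ⟨0, ⟨le_refl 0, ht⟩, h0⟩
  have hSbdd : BddAbove S := ⟨t, fun s hs => hs.1.2⟩
  have hSclosed : IsClosed S := by
    have : S = Set.Icc (0:ℝ) t ∩ v ⁻¹' Set.Ici 0 := by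
      ext s; simp [hS, Set.mem_Icc, and_assoc]
    rw [this]
    exact isClosed_Icc.inter (isClosed_Ici.preimage hv.continuous)
  set m := sSup S with hm
  have hmS : m ∈ S := hSclosed.csSup_mem hSne hSbdd
  have hmt : m ≤ t := hmS.1.2
  have hmv : 0 ≤ v m := hmS.2
  have hmlt : m < t := hmt.lt_of_ne (fun h => absurd hmv (not_le.mpr (h ▸ hneg)))
  have hneg' : ∀ s, m < s → s ≤ t → v s < 0 := by
    intro s hms hst
    by_contra h
    push_neg at h
    have : s ∈ S := ⟨⟨le_trans hmS.1.1 hms.le, hst⟩, h⟩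
    exact absurd (le_csSup hSbdd this) (not_le.mpr hms)
  have hmono : MonotoneOn v (Set.Icc m t) := by
    apply monotoneOn_of_deriv_nonneg (convex_Icc m t) hv.continuous.continuousOn
      (hv.differentiableOn.mono interior_subset)
    intro s hs
    rw [interior_Icc] at hs
    exact hd s (hneg' s hs.1 hs.2.le)
  have : v m ≤ v t := hmono ⟨le_rfl, hmt⟩ ⟨hmt, le_rfl⟩ hmt
  linarith

/-- If `u : ℝ × ℝ → ℝ` is differentiable and satisfies the
age-structured population equation
`∂u/∂t (a,t) + ∂u/∂a (a,t) = -μ(a,t) * u(a,t) + λ(a,t)` at every point,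
with `μ, λ ≥ 0` everywhere, and `u(a,0) ≥ 0` for all `a ≥ 0`, then
`u(a,t) ≥ 0` for all `t ≥ 0` and all `a ≥ t`. -/
theorem age_structured_positivity
    (u μ lam : ℝ × ℝ → ℝ)
    (hu : Differentiable ℝ u)
    (hpde : ∀ a t : ℝ,
      deriv (fun s => u (a, s)) t + deriv (fun b => u (b, t)) a
        = -μ (a, t) * u (a, t) + lam (a, t))
    (hμ : ∀ a t : ℝ, 0 ≤ μ (a, t))
    (hlam : ∀ a t : ℝ, 0 ≤ lam (a, t))
    (hu0 : ∀ a : ℝ, 0 ≤ a → 0 ≤ u (a, 0)) :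
    ∀ t : ℝ, 0 ≤ t → ∀ a : ℝ, t ≤ a → 0 ≤ u (a, t) := by
  intro t ht a hat
  set c := a - t with hc
  have hc0 : 0 ≤ c := by linarith
  set v : ℝ → ℝ := fun s => u (c + s, s) with hv
  -- derivative of v
  have hvderiv : ∀ s : ℝ, HasDerivAt v (fderiv ℝ u (c + s, s) (1, 1)) s := by
    intro s
    have hg : HasDerivAt (fun s : ℝ => ((c + s : ℝ), s)) ((1 : ℝ), (1 : ℝ)) s := by
      simpa using ((hasDerivAt_const s c).add (hasDerivAt_id s)).prodMk (hasDerivAt_id s)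
    exact HasFDerivAt.comp_hasDerivAt s (hu (c + s, s)).hasFDerivAt hg
  have hpartA : ∀ b τ : ℝ, deriv (fun x => u (x, τ)) b = fderiv ℝ u (b, τ) (1, 0) := by
    intro b τ
    have hg : HasDerivAt (fun x : ℝ => ((x : ℝ), τ)) ((1 : ℝ), (0 : ℝ)) b :=
      (hasDerivAt_id b).prodMk (hasDerivAt_const b τ)
    exact (HasFDerivAt.comp_hasDerivAt b (hu (b, τ)).hasFDerivAt hg).deriv
  have hpartT : ∀ b τ : ℝ, deriv (fun x => u (b, x)) τ = fderiv ℝ u (b, τ) (0, 1) := by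
    intro b τ
    have hg : HasDerivAt (fun x : ℝ => ((b : ℝ), x)) ((0 : ℝ), (1 : ℝ)) τ :=
      (hasDerivAt_const τ b).prodMk (hasDerivAt_id τ)
    exact (HasFDerivAt.comp_hasDerivAt τ (hu (b, τ)).hasFDerivAt hg).deriv
  have hdv : ∀ s : ℝ, deriv v s = -μ (c + s, s) * v s + lam (c + s, s) := by
    intro s
    have h1 : deriv v s = fderiv ℝ u (c + s, s) (1, 1) := (hvderiv s).deriv
    have hsplit : ((1 : ℝ), (1 : ℝ)) = ((1 : ℝ), (0 : ℝ)) + ((0 : ℝ), (1 : ℝ)) := by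
      simp
    rw [h1, hsplit, map_add, ← hpartA (c + s) s, ← hpartT (c + s) s]
    rw [add_comm]
    exact hpde (c + s) s
  have hvdiff : Differentiable ℝ v := fun s => (hvderiv s).differentiableAt
  have h0 : 0 ≤ v 0 := hu0 (c + 0) (by simpa using hc0)
  have key : ∀ s : ℝ, 0 ≤ s → 0 ≤ v s := by
    apply nonneg_of_deriv_nonneg_of_neg v hvdiff h0
    intro s hs
    rw [hdv s]
    have := hμ (c + s) s
    have := hlam (c + s) s
    nlinarith
  have := key t ht
  simpa [hv, hc] using this
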